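/- Let {A_k ⊗ B_k}_{k=1}^N be product operators on H_A ⊗ H_B (dim H_A = dim H_B = D) and |ψ⟩ a pure state. Then for every 1 ≤ n ≤ D, Σ_k χ_n(Tr_A[(A_k⊗B_k)|ψ⟩⟨ψ|(A_k⊗B_k)†]) ≤ ‖R‖ · χ_n(Tr_A|ψ⟩⟨ψ|), where R = Σ_k A_k†A_k ⊗ B_k†B_k and ‖R‖ is its operator norm. -/

import Mathlib

open Matrix BigOperators Kronecker

/-- Sum of the `n` smallest eigenvalues (with multiplicity) of a Hermitian matrix. -/
noncomputable def chi {D : ℕ} (n : ℕ) (M : Matrix (Fin D) (Fin D) ℂ) : ℝ :=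
  if hM : M.IsHermitian then
    sInf {x : ℝ | ∃ s : Finset (Fin D), s.card = n ∧ x = ∑ i ∈ s, hM.eigenvalues i}
  else 0

/-- Largest eigenvalue of a Hermitian matrix (the operator norm for positive matrices). -/
noncomputable def maxEig {m : Type*} [Fintype m] [DecidableEq m]
    (M : Matrix m m ℂ) : ℝ :=
  if hM : M.IsHermitian then sSup {x : ℝ | ∃ i, x = hM.eigenvalues i} else 0

/-- Partial trace over the `A` factor, in matrix form. -/
noncomputable def ptraceA {DA DB : ℕ} (M : Matrix (Fin DA × Fin DB) (Fin DA × Fin DB) ℂ) :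
    Matrix (Fin DB) (Fin DB) ℂ :=
  Matrix.of fun j j' => ∑ a : Fin DA, M (a, j) (a, j')

set_option linter.unusedSectionVars false

section SpecAux
variable {m : Type*} [Fintype m] [DecidableEq m]

lemma re_dot_self (v : m → ℂ) : (star v ⬝ᵥ v).re = ∑ j, Complex.normSq (v j) := by
  rw [dotProduct, Complex.re_sum]
  refine Finset.sum_congr rfl fun j _ => ?_
  simp [Pi.star_apply, Complex.normSq_apply, Complex.mul_re]

lemma star_starmulVec (U : Matrix m m ℂ) (x : m → ℂ) :
    star (star U *ᵥ x) = star x ᵥ* U := by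
  rw [star_mulVec, Matrix.star_eq_conjTranspose, conjTranspose_conjTranspose]

lemma unitary_dot_self {U : Matrix m m ℂ} (hU : U ∈ Matrix.unitaryGroup m ℂ) (x : m → ℂ) :
    star (star U *ᵥ x) ⬝ᵥ (star U *ᵥ x) = star x ⬝ᵥ x := by
  rw [star_starmulVec, dotProduct_mulVec, vecMul_vecMul, ← dotProduct_mulVec,
    Matrix.mem_unitaryGroup_iff.mp hU, one_mulVec]

lemma quad_expand (M : Matrix m m ℂ) (hM : M.IsHermitian) (x : m → ℂ) :
    (star x ⬝ᵥ M *ᵥ x).re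
      = ∑ j, hM.eigenvalues j *
          Complex.normSq ((star (hM.eigenvectorUnitary : Matrix m m ℂ) *ᵥ x) j) := by
  set U := (hM.eigenvectorUnitary : Matrix m m ℂ) with hUdef
  set c := star U *ᵥ x with hcdef
  have hx : M *ᵥ x = (U * Matrix.diagonal (RCLike.ofReal ∘ hM.eigenvalues)) *ᵥ c := by
    conv_lhs => rw [hM.spectral_theorem, Unitary.conjStarAlgAut_apply]
    rw [hcdef, mulVec_mulVec, Matrix.mul_assoc]
  have hstar : star x ⬝ᵥ ((U * Matrix.diagonal (RCLike.ofReal ∘ hM.eigenvalues)) *ᵥ c)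
      = star c ⬝ᵥ (Matrix.diagonal (RCLike.ofReal ∘ hM.eigenvalues) *ᵥ c) := by
    simp only [hcdef, star_starmulVec, dotProduct_mulVec, vecMul_vecMul]
  rw [hx, hstar, dotProduct, Complex.re_sum]
  refine Finset.sum_congr rfl fun j _ => ?_
  rw [mulVec_diagonal]
  simp only [Pi.star_apply, Function.comp_apply, Complex.star_def]
  have h1 : (starRingEnd ℂ) (c j) * (RCLike.ofReal (hM.eigenvalues j) * c j)
      = ((hM.eigenvalues j : ℝ) : ℂ) * ((starRingEnd ℂ) (c j) * c j) := by
    norm_num [RCLike.ofReal_alg]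
    ring
  rw [h1, ← Complex.normSq_eq_conj_mul_self, ← Complex.ofReal_mul, Complex.ofReal_re]

lemma eig_le_maxEig (M : Matrix m m ℂ) (hM : M.IsHermitian) (i : m) :
    hM.eigenvalues i ≤ maxEig M := by
  rw [maxEig, dif_pos hM]
  have hset : {x : ℝ | ∃ i, x = hM.eigenvalues i} = Set.range hM.eigenvalues := by
    ext x; simp [eq_comm]
  rw [hset]
  exact le_csSup (Set.finite_range _).bddAbove ⟨i, rfl⟩

lemma rayleigh (M : Matrix m m ℂ) (hM : M.IsHermitian) (x : m → ℂ) :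
    (star x ⬝ᵥ M *ᵥ x).re ≤ maxEig M * (star x ⬝ᵥ x).re := by
  rw [quad_expand M hM x]
  calc ∑ j, hM.eigenvalues j * Complex.normSq ((star (hM.eigenvectorUnitary : Matrix m m ℂ) *ᵥ x) j)
      ≤ ∑ j, maxEig M * Complex.normSq ((star (hM.eigenvectorUnitary : Matrix m m ℂ) *ᵥ x) j) := by
        refine Finset.sum_le_sum fun j _ => ?_
        exact mul_le_mul_of_nonneg_right (eig_le_maxEig M hM j) (Complex.normSq_nonneg _)
    _ = maxEig M * (star x ⬝ᵥ x).re := by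
        rw [← Finset.mul_sum, ← re_dot_self, unitary_dot_self hM.eigenvectorUnitary.2]

lemma dot_mulVec_self (M : Matrix m m ℂ) (x : m → ℂ) :
    star (M *ᵥ x) ⬝ᵥ (M *ᵥ x) = star x ⬝ᵥ ((Mᴴ * M) *ᵥ x) := by
  rw [star_mulVec, dotProduct_mulVec, vecMul_vecMul, ← dotProduct_mulVec]

end SpecAux

section ChiAux
variable {D n : ℕ} (M : Matrix (Fin D) (Fin D) ℂ) (hM : M.IsHermitian)

lemma chi_set_finite :
    {x : ℝ | ∃ s : Finset (Fin D), s.card = n ∧ x = ∑ i ∈ s, hM.eigenvalues i}.Finite := by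
  apply Set.Finite.subset (Set.finite_range (fun s : Finset (Fin D) => ∑ i ∈ s, hM.eigenvalues i))
  rintro x ⟨s, _, rfl⟩
  exact ⟨s, rfl⟩

lemma chi_le {s : Finset (Fin D)} (hs : s.card = n) :
    chi n M ≤ ∑ i ∈ s, hM.eigenvalues i := by
  rw [chi, dif_pos hM]
  exact csInf_le (chi_set_finite M hM).bddBelow ⟨s, hs, rfl⟩

lemma chi_exists (hn : n ≤ D) :
    ∃ s : Finset (Fin D), s.card = n ∧ chi n M = ∑ i ∈ s, hM.eigenvalues i := by
  obtain ⟨s, -, hs⟩ :=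
    Finset.exists_subset_card_eq (s := (Finset.univ : Finset (Fin D))) (by simpa using hn)
  have hne : {x : ℝ | ∃ s : Finset (Fin D), s.card = n ∧ x = ∑ i ∈ s, hM.eigenvalues i}.Nonempty :=
    ⟨_, s, hs, rfl⟩
  obtain ⟨s', hs', hval⟩ := hne.csInf_mem (chi_set_finite M hM)
  refine ⟨s', hs', ?_⟩
  rw [chi, dif_pos hM]
  exact hval

end ChiAux

lemma bathtub {D : ℕ} (n : ℕ) (μ t : Fin D → ℝ) (h0 : ∀ j, 0 ≤ t j) (h1 : ∀ j, t j ≤ 1)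
    (hsum : ∑ j, t j = n) (hn1 : 1 ≤ n) :
    ∃ s : Finset (Fin D), s.card = n ∧ ∑ i ∈ s, μ i ≤ ∑ j, μ j * t j := by
  have hnD : n ≤ D := by
    have : (n : ℝ) ≤ D := by
      rw [← hsum]
      calc ∑ j, t j ≤ ∑ _j : Fin D, (1:ℝ) := Finset.sum_le_sum fun j _ => h1 j
      _ = D := by simp
    exact_mod_cast this
  have hne : ((Finset.univ : Finset (Fin D)).powersetCard n).Nonempty := by
    rw [Finset.powersetCard_nonempty]
    simpa using hnD
  obtain ⟨s, hsmem, hsmin⟩ := Finset.exists_min_image _ (fun s => ∑ i ∈ s, μ i) hne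
  rw [Finset.mem_powersetCard_univ] at hsmem
  have key : ∀ i ∈ s, ∀ j, j ∉ s → μ i ≤ μ j := by
    intro i hi j hj
    by_contra hcon
    push_neg at hcon
    have hj' : j ∉ s.erase i := fun h => hj (Finset.mem_of_mem_erase h)
    have hcard : (insert j (s.erase i)).card = n := by
      rw [Finset.card_insert_of_notMem hj', Finset.card_erase_of_mem hi, hsmem]
      omega
    have := hsmin (insert j (s.erase i)) (by rwa [Finset.mem_powersetCard_univ])
    rw [Finset.sum_insert hj'] at this
    have herase : ∑ x ∈ s.erase i, μ x = (∑ x ∈ s, μ x) - μ i := by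
      rw [← Finset.add_sum_erase s μ hi]; ring
    rw [herase] at this
    linarith
  have hsne : s.Nonempty := Finset.card_pos.mp (by omega)
  obtain ⟨i₀, hi₀, hmax⟩ := Finset.exists_max_image s μ hsne
  set c := μ i₀ with hc
  have h2 : ∀ i ∈ s, μ i + c * (t i - 1) ≤ μ i * t i := by
    intro i hi
    have := hmax i hi
    have := h1 i
    nlinarith [key i₀ hi₀]
  have h3 : ∀ j ∈ sᶜ, c * t j ≤ μ j * t j := by
    intro j hj
    rw [Finset.mem_compl] at hj
    have := key i₀ hi₀ j hj
    nlinarith [h0 j]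
  have hsplit : ∑ j, μ j * t j = ∑ j ∈ s, μ j * t j + ∑ j ∈ sᶜ, μ j * t j :=
    (Finset.sum_add_sum_compl s _).symm
  have htsplit : ∑ j ∈ s, t j + ∑ j ∈ sᶜ, t j = (n : ℝ) := by
    rw [Finset.sum_add_sum_compl]; exact hsum
  have hA : ∑ i ∈ s, (μ i + c * (t i - 1)) ≤ ∑ i ∈ s, μ i * t i := Finset.sum_le_sum h2
  have hB : ∑ j ∈ sᶜ, c * t j ≤ ∑ j ∈ sᶜ, μ j * t j := Finset.sum_le_sum h3
  have hAe : ∑ i ∈ s, (μ i + c * (t i - 1)) = ∑ i ∈ s, μ i + c * (∑ i ∈ s, t i) - c * n := by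
    rw [Finset.sum_add_distrib]
    rw [← Finset.mul_sum]
    rw [Finset.sum_sub_distrib]
    simp [hsmem, Finset.mul_sum]
    ring_nf
    rw [Finset.mul_sum]
    ring
  have hBe : ∑ j ∈ sᶜ, c * t j = c * ∑ j ∈ sᶜ, t j := by rw [Finset.mul_sum]
  have hct : c * ∑ j ∈ s, t j + c * ∑ j ∈ sᶜ, t j = c * n := by rw [← mul_add, htsplit]
  exact ⟨s, hsmem, by linarith⟩

/-- The sum of the `n` smallest eigenvalues is at most the quadratic form summed over any
orthonormal family of `n` vectors. -/
lemma variational {D n : ℕ} (M : Matrix (Fin D) (Fin D) ℂ) (hM : M.IsHermitian)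
    (p : Fin n → (Fin D → ℂ))
    (hp : ∀ i j, star (p i) ⬝ᵥ p j = if i = j then 1 else 0)
    (hn1 : 1 ≤ n) :
    ∃ s : Finset (Fin D), s.card = n ∧
      ∑ i ∈ s, hM.eigenvalues i ≤ ∑ i, (star (p i) ⬝ᵥ M *ᵥ p i).re := by
  classical
  set U := (hM.eigenvectorUnitary : Matrix (Fin D) (Fin D) ℂ) with hU
  set c : Fin n → (Fin D → ℂ) := fun i => star U *ᵥ p i with hc
  set t : Fin D → ℝ := fun j => ∑ i, Complex.normSq (c i j) with ht
  set p' : Fin n → EuclideanSpace ℂ (Fin D) := fun i => (WithLp.equiv 2 (Fin D → ℂ)).symm (p i)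
    with hp'
  have hortho : Orthonormal ℂ p' := by
    rw [orthonormal_iff_ite]
    intro i j
    rw [hp']
    show p j ⬝ᵥ star (p i) = _
    rw [dotProduct_comm, hp i j]
  have hinner : ∀ i j, c i j = inner (𝕜 := ℂ) ((WithLp.equiv 2 (Fin D → ℂ)).symm
      (⇑(hM.eigenvectorBasis j))) (p' i) := by
    intro i j
    show c i j = p i ⬝ᵥ star (hM.eigenvectorBasis j).ofLp
    rw [dotProduct_comm]
    simp [hc, Matrix.mulVec, dotProduct, hU, Matrix.IsHermitian.eigenvectorUnitary_apply]
  have ht1 : ∀ j, t j ≤ 1 := by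
    intro j
    have hb := hortho.sum_inner_products_le (s := Finset.univ)
      ((WithLp.equiv 2 (Fin D → ℂ)).symm (⇑(hM.eigenvectorBasis j)))
    have hnorm : ‖(WithLp.equiv 2 (Fin D → ℂ)).symm (⇑(hM.eigenvectorBasis j))‖ = 1 :=
      hM.eigenvectorBasis.orthonormal.1 j
    calc t j = ∑ i, ‖inner (𝕜 := ℂ) (p' i) ((WithLp.equiv 2 (Fin D → ℂ)).symm
          (⇑(hM.eigenvectorBasis j)))‖ ^ 2 := by
          refine Finset.sum_congr rfl fun i _ => ?_
          rw [← norm_inner_symm, ← hinner, Complex.sq_norm]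
      _ ≤ _ := hb
      _ = 1 := by rw [hnorm]; norm_num
  have ht0 : ∀ j, 0 ≤ t j := fun j => Finset.sum_nonneg fun i _ => Complex.normSq_nonneg _
  have htsum : ∑ j, t j = n := by
    rw [ht]
    rw [Finset.sum_comm]
    have : ∀ i : Fin n, ∑ j, Complex.normSq (c i j) = 1 := by
      intro i
      rw [← re_dot_self (c i), hc, unitary_dot_self hM.eigenvectorUnitary.2, hp i i, if_pos rfl,
        Complex.one_re]
    simp [this]
  obtain ⟨s, hcard, hle⟩ := bathtub n hM.eigenvalues t ht0 ht1 htsum hn1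
  refine ⟨s, hcard, hle.trans (le_of_eq ?_)⟩
  have hre : ∀ i, (star (p i) ⬝ᵥ M *ᵥ p i).re = ∑ j, hM.eigenvalues j * Complex.normSq (c i j) :=
    fun i => quad_expand M hM (p i)
  calc ∑ j, hM.eigenvalues j * t j = ∑ j, ∑ i, hM.eigenvalues j * Complex.normSq (c i j) := by
        refine Finset.sum_congr rfl fun j _ => ?_
        rw [ht, Finset.mul_sum]
    _ = ∑ i, ∑ j, hM.eigenvalues j * Complex.normSq (c i j) := Finset.sum_comm
    _ = ∑ i, (star (p i) ⬝ᵥ M *ᵥ p i).re := by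
        refine Finset.sum_congr rfl fun i _ => (hre i).symm

section MatId
variable {D DA DB : ℕ}

lemma sandwich_vecMulVec {m : Type*} [Fintype m] (M : Matrix m m ℂ) (x : m → ℂ) :
    M * Matrix.vecMulVec x (star x) * Mᴴ
      = Matrix.vecMulVec (M *ᵥ x) (star (M *ᵥ x)) := by
  ext i k
  simp only [Matrix.mul_apply, Matrix.vecMulVec_apply, Matrix.conjTranspose_apply,
    Matrix.mulVec, dotProduct, Pi.star_apply, star_sum, star_mul', star_star,
    Finset.sum_mul, Finset.mul_sum]
  refine Finset.sum_congr rfl fun j _ => Finset.sum_congr rfl fun j' _ => by ring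

lemma ptraceA_vecMulVec_hermitian (φ : Fin DA × Fin DB → ℂ) :
    (ptraceA (Matrix.vecMulVec φ (star φ))).IsHermitian := by
  rw [Matrix.IsHermitian]
  ext j j'
  simp only [Matrix.conjTranspose_apply, ptraceA, Matrix.of_apply, Matrix.vecMulVec_apply,
    Pi.star_apply, star_sum, star_mul', star_star]
  refine Finset.sum_congr rfl fun a _ => by ring

/-- quadratic form of a partial trace of a pure state -/
lemma ptrace_quad (φ : Fin DA × Fin DB → ℂ) (q : Fin DB → ℂ) :
    star (star q) ⬝ᵥ (ptraceA (Matrix.vecMulVec φ (star φ))) *ᵥ (star q)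
      = star ((Matrix.of fun a j => φ (a, j)) *ᵥ q) ⬝ᵥ ((Matrix.of fun a j => φ (a, j)) *ᵥ q) := by
  simp only [star_star, dotProduct, Matrix.mulVec, Matrix.of_apply, ptraceA,
    Matrix.vecMulVec_apply, Pi.star_apply, star_sum, star_mul', star_star,
    Finset.mul_sum, Finset.sum_mul]
  conv_lhs => enter [2, j]; rw [Finset.sum_comm]
  rw [Finset.sum_comm]
  refine Finset.sum_congr rfl fun a _ => ?_
  refine Finset.sum_congr rfl fun j _ => ?_
  refine Finset.sum_congr rfl fun j' _ => by ring

/-- factorization of the contraction matrix of `(A ⊗ M) χ` -/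
lemma contraction_factor (A : Matrix (Fin DA) (Fin DA) ℂ) (M : Matrix (Fin DB) (Fin DB) ℂ)
    (χ : Fin DA × Fin DB → ℂ) (q : Fin DB → ℂ) :
    (Matrix.of fun a j => ((A ⊗ₖ M) *ᵥ χ) (a, j)) *ᵥ q
      = A *ᵥ ((Matrix.of fun a j => χ (a, j)) *ᵥ (Mᵀ *ᵥ q)) := by
  funext a
  simp only [Matrix.mulVec, dotProduct, Matrix.of_apply, Matrix.kroneckerMap_apply,
    Matrix.transpose_apply, ← Finset.univ_product_univ, Finset.sum_product,
    Finset.mul_sum, Finset.sum_mul]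
  rw [Finset.sum_comm]
  conv_lhs => enter [2, a']; rw [Finset.sum_comm]
  refine Finset.sum_congr rfl fun a' _ => Finset.sum_congr rfl fun j' _ =>
    Finset.sum_congr rfl fun j _ => by ring

lemma one_kron_mulVec (Q : Matrix (Fin DB) (Fin DB) ℂ) (ψ : Fin DA × Fin DB → ℂ)
    (a : Fin DA) (j : Fin DB) :
    ((1 ⊗ₖ Q) *ᵥ ψ) (a, j) = ∑ j', Q j j' * ψ (a, j') := by
  simp only [Matrix.mulVec, dotProduct, Matrix.kroneckerMap_apply, Matrix.one_apply,
    ← Finset.univ_product_univ, Finset.sum_product, ite_mul, one_mul, zero_mul]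
  simp [Finset.sum_ite_eq]

/-- ⟨ψ, (1 ⊗ Q) ψ⟩ = tr (Q ρB) -/
lemma dot_one_kron (Q : Matrix (Fin DB) (Fin DB) ℂ) (ψ : Fin DA × Fin DB → ℂ) :
    star ψ ⬝ᵥ ((1 ⊗ₖ Q) *ᵥ ψ)
      = Matrix.trace (Q * ptraceA (Matrix.vecMulVec ψ (star ψ))) := by
  simp only [Matrix.trace, Matrix.diag_apply, Matrix.mul_apply, ptraceA, Matrix.of_apply,
    Matrix.vecMulVec_apply, Pi.star_apply, dotProduct, one_kron_mulVec,
    ← Finset.univ_product_univ, Finset.sum_product, Finset.mul_sum, Finset.sum_mul]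
  rw [Finset.sum_comm]
  conv_lhs => enter [2, j]; rw [Finset.sum_comm]
  refine Finset.sum_congr rfl fun j _ => Finset.sum_congr rfl fun j' _ =>
    Finset.sum_congr rfl fun a _ => by ring

lemma kron_conjTranspose {l m p q : Type*} (A : Matrix l m ℂ) (B : Matrix p q ℂ) :
    (A ⊗ₖ B)ᴴ = Aᴴ ⊗ₖ Bᴴ := by
  ext ⟨i1, i2⟩ ⟨j1, j2⟩
  simp [Matrix.conjTranspose_apply, star_mul']

end MatId

section Proj
variable {D : ℕ}

lemma vecMulVec_conjT (x y : Fin D → ℂ) :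
    (Matrix.vecMulVec x y)ᴴ = Matrix.vecMulVec (star y) (star x) := by
  ext i j
  simp [Matrix.vecMulVec_apply, Matrix.conjTranspose_apply, star_mul', mul_comm]

lemma vecMulVec_mul_vecMulVec (x y z w : Fin D → ℂ) :
    Matrix.vecMulVec x y * Matrix.vecMulVec z w = (y ⬝ᵥ z) • Matrix.vecMulVec x w := by
  ext i j
  simp only [Matrix.mul_apply, Matrix.vecMulVec_apply, Matrix.smul_apply, dotProduct,
    smul_eq_mul, Finset.sum_mul, Finset.mul_sum]
  refine Finset.sum_congr rfl fun k _ => by ring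

lemma trace_vecMulVec_mul (x y : Fin D → ℂ) (ρ : Matrix (Fin D) (Fin D) ℂ) :
    Matrix.trace (Matrix.vecMulVec x y * ρ) = y ⬝ᵥ (ρ *ᵥ x) := by
  simp only [Matrix.trace, Matrix.diag_apply, Matrix.mul_apply, Matrix.vecMulVec_apply,
    dotProduct, Matrix.mulVec, Finset.mul_sum]
  rw [Finset.sum_comm]
  refine Finset.sum_congr rfl fun j _ => Finset.sum_congr rfl fun k _ => by ring

variable (u : Fin D → (Fin D → ℂ)) (hu : ∀ i j, star (u i) ⬝ᵥ u j = if i = j then 1 else 0)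
  (S : Finset (Fin D))

lemma proj_herm : (∑ i ∈ S, Matrix.vecMulVec (u i) (star (u i)))ᴴ
    = ∑ i ∈ S, Matrix.vecMulVec (u i) (star (u i)) := by
  rw [Matrix.conjTranspose_sum]
  refine Finset.sum_congr rfl fun i _ => by rw [vecMulVec_conjT, star_star]

include hu in
lemma proj_idem : (∑ i ∈ S, Matrix.vecMulVec (u i) (star (u i)))
    * (∑ i ∈ S, Matrix.vecMulVec (u i) (star (u i)))
    = ∑ i ∈ S, Matrix.vecMulVec (u i) (star (u i)) := by
  rw [Finset.sum_mul]
  refine Finset.sum_congr rfl fun i hi => ?_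
  rw [Finset.mul_sum]
  have : ∀ j ∈ S, Matrix.vecMulVec (u i) (star (u i)) * Matrix.vecMulVec (u j) (star (u j))
      = if i = j then Matrix.vecMulVec (u i) (star (u j)) else 0 := by
    intro j _
    rw [vecMulVec_mul_vecMulVec, hu i j]
    split <;> simp
  rw [Finset.sum_congr rfl this, Finset.sum_ite_eq S i _]
  rw [if_pos hi]

end Proj

section Ker
variable {D n : ℕ}

lemma rank_sum_vecMulVec (u : Fin D → (Fin D → ℂ)) (T : Finset (Fin D)) :
    (∑ i ∈ T, Matrix.vecMulVec (u i) (star (u i))).rank ≤ T.card := by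
  classical
  set C : Matrix (Fin D) {x // x ∈ T} ℂ := Matrix.of fun j i => u i.1 j with hC
  have hfact : ∑ i ∈ T, Matrix.vecMulVec (u i) (star (u i)) = C * Cᴴ := by
    ext j j'
    rw [Matrix.sum_apply, Matrix.mul_apply,
      ← Finset.sum_coe_sort T (fun i => Matrix.vecMulVec (u i) (star (u i)) j j')]
    refine Finset.sum_congr rfl fun i _ => ?_
    simp [hC, Matrix.vecMulVec_apply, Matrix.conjTranspose_apply]
  rw [hfact]
  calc (C * Cᴴ).rank ≤ C.rank := Matrix.rank_mul_le_left C Cᴴ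
    _ ≤ Fintype.card {x // x ∈ T} := Matrix.rank_le_card_width C
    _ = T.card := Fintype.card_coe T

lemma exists_orthonormal_ker (W : Matrix (Fin D) (Fin D) ℂ) (hrank : W.rank + n ≤ D) :
    ∃ q : Fin n → (Fin D → ℂ),
      (∀ i j, star (q i) ⬝ᵥ q j = if i = j then 1 else 0) ∧ ∀ i, W *ᵥ q i = 0 := by
  classical
  set e := WithLp.linearEquiv 2 ℂ (Fin D → ℂ) with he
  set K : Submodule ℂ (Fin D → ℂ) := LinearMap.ker W.mulVecLin with hK
  set K' : Submodule ℂ (EuclideanSpace ℂ (Fin D)) := K.comap e.toLinearMap with hK'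
  have hKfin : Module.finrank ℂ K + W.rank = D := by
    have h1 := LinearMap.finrank_range_add_finrank_ker W.mulVecLin
    rw [Module.finrank_pi] at h1
    simp only [Fintype.card_fin] at h1
    have h2 : W.rank = Module.finrank ℂ (LinearMap.range W.mulVecLin) := rfl
    rw [hK, h2]
    omega
  have hK'K : Module.finrank ℂ K' = Module.finrank ℂ K := by
    rw [hK', Submodule.comap_equiv_eq_map_symm]
    exact LinearEquiv.finrank_map_eq e.symm K
  have hle : n ≤ Module.finrank ℂ K' := by omega
  set ob := stdOrthonormalBasis ℂ K' with hob
  refine ⟨fun i => e ((ob (Fin.castLE hle i) : EuclideanSpace ℂ (Fin D))), ?_, ?_⟩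
  · intro i j
    have h1 : star (e ((ob (Fin.castLE hle i) : EuclideanSpace ℂ (Fin D))))
        ⬝ᵥ e ((ob (Fin.castLE hle j) : EuclideanSpace ℂ (Fin D)))
        = inner (𝕜 := ℂ) ((ob (Fin.castLE hle i) : EuclideanSpace ℂ (Fin D)))
            ((ob (Fin.castLE hle j) : EuclideanSpace ℂ (Fin D))) :=
      by rw [EuclideanSpace.inner_eq_star_dotProduct, dotProduct_comm]; rfl
    rw [h1, ← Submodule.coe_inner, orthonormal_iff_ite.mp ob.orthonormal]
    simp [Fin.castLE_inj]
  · intro i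
    have hmem := (ob (Fin.castLE hle i)).2
    have h2 : W.mulVecLin (e ((ob (Fin.castLE hle i) : EuclideanSpace ℂ (Fin D)))) = 0 := hmem
    rwa [Matrix.mulVecLin_apply] at h2

end Ker

lemma bessel_rows {D n : ℕ} (J : Matrix (Fin D) (Fin D) ℂ) (q : Fin n → (Fin D → ℂ))
    (hq : ∀ i j, star (q i) ⬝ᵥ q j = if i = j then 1 else 0) (a : Fin D) :
    ∑ i, Complex.normSq ((J *ᵥ q i) a) ≤ ∑ j, Complex.normSq (J a j) := by
  classical
  set q' : Fin n → EuclideanSpace ℂ (Fin D) := fun i => (WithLp.equiv 2 (Fin D → ℂ)).symm (q i)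
    with hq'
  have hortho : Orthonormal ℂ q' := by
    rw [orthonormal_iff_ite]
    intro i j
    rw [hq']
    show q j ⬝ᵥ star (q i) = _
    rw [dotProduct_comm, hq i j]
  set x : EuclideanSpace ℂ (Fin D) := (WithLp.equiv 2 (Fin D → ℂ)).symm (star (J a)) with hx
  have hinner : ∀ i, (J *ᵥ q i) a = inner (𝕜 := ℂ) x (q' i) := by
    intro i
    show (J *ᵥ q i) a = q i ⬝ᵥ star (star (J a))
    rw [star_star, dotProduct_comm]
    rfl
  have hb := hortho.sum_inner_products_le (s := Finset.univ) x
  have hxnorm : ‖x‖ ^ 2 = ∑ j, Complex.normSq (J a j) := by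
    rw [EuclideanSpace.norm_eq, Real.sq_sqrt (by positivity)]
    refine Finset.sum_congr rfl fun j _ => ?_
    simp [hx, Complex.normSq_eq_norm_sq, Complex.norm_conj]
  calc ∑ i, Complex.normSq ((J *ᵥ q i) a)
      = ∑ i, ‖inner (𝕜 := ℂ) (q' i) x‖ ^ 2 := by
        refine Finset.sum_congr rfl fun i _ => ?_
        rw [← norm_inner_symm, ← hinner i, Complex.sq_norm]
    _ ≤ ‖x‖ ^ 2 := hb
    _ = ∑ j, Complex.normSq (J a j) := hxnorm

/-- The per-`k` inequality. -/
lemma per_k {D n : ℕ} (A B : Matrix (Fin D) (Fin D) ℂ) (ψ : Fin D × Fin D → ℂ)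
    (P : Matrix (Fin D) (Fin D) ℂ)
    (hrank : ((B * (1 - P))ᵀ).rank + n ≤ D) (hn1 : 1 ≤ n) :
    chi n (ptraceA ((A ⊗ₖ B) * Matrix.vecMulVec ψ (star ψ) * (A ⊗ₖ B)ᴴ))
      ≤ (star ((A ⊗ₖ B) *ᵥ (((1 : Matrix (Fin D) (Fin D) ℂ) ⊗ₖ P) *ᵥ ψ)) ⬝ᵥ ((A ⊗ₖ B) *ᵥ (((1 : Matrix (Fin D) (Fin D) ℂ) ⊗ₖ P) *ᵥ ψ))).re := by
  classical
  set ψS := ((1 : Matrix (Fin D) (Fin D) ℂ) ⊗ₖ P) *ᵥ ψ with hψS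
  set ψperp := ((1 : Matrix (Fin D) (Fin D) ℂ) ⊗ₖ (1 - P)) *ᵥ ψ with hψperp
  have hψsplit : ψ = ψS + ψperp := by
    rw [hψS, hψperp, ← Matrix.add_mulVec, ← Matrix.kronecker_add, add_sub_cancel,
      Matrix.one_kronecker_one, Matrix.one_mulVec]
  set φ := (A ⊗ₖ B) *ᵥ ψ with hφ
  set φS := (A ⊗ₖ B) *ᵥ ψS with hφS
  set φperp := (A ⊗ₖ B) *ᵥ ψperp with hφperp
  rw [sandwich_vecMulVec]
  have hσ := ptraceA_vecMulVec_hermitian (DA := D) (DB := D) φ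
  obtain ⟨q, hq, hker⟩ := exists_orthonormal_ker ((B * (1 - P))ᵀ) hrank
  set p : Fin n → (Fin D → ℂ) := fun i => star (q i) with hpdef
  have hp : ∀ i j, star (p i) ⬝ᵥ p j = if i = j then 1 else 0 := by
    intro i j
    rw [hpdef]
    simp only [star_star]
    rw [dotProduct_comm, hq j i]
    simp [eq_comm]
  obtain ⟨s, hscard, hsle⟩ := variational _ hσ p hp hn1
  have h1 : chi n (ptraceA (Matrix.vecMulVec φ (star φ))) ≤ ∑ i ∈ s, hσ.eigenvalues i :=
    chi_le _ hσ hscard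
  set J := Matrix.of fun a j => φ (a, j) with hJ
  set JS := Matrix.of fun a j => φS (a, j) with hJS
  have hφsplit : φ = φS + φperp := by
    rw [hφ, hφS, hφperp, ← Matrix.mulVec_add, ← hψsplit]
  have hJq : ∀ i, J *ᵥ q i = JS *ᵥ q i := by
    intro i
    have hJsum : J = JS + Matrix.of fun a j => φperp (a, j) := by
      ext a j
      simp [hJ, hJS, hφsplit]
    rw [hJsum, Matrix.add_mulVec]
    have hfac : φperp = (A ⊗ₖ (B * (1 - P))) *ᵥ ψ := by
      rw [hφperp, hψperp, Matrix.mulVec_mulVec, ← Matrix.mul_kronecker_mul, Matrix.mul_one]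
    have hzero : (Matrix.of fun a j => φperp (a, j)) *ᵥ q i = 0 := by
      rw [hfac, contraction_factor, hker i, Matrix.mulVec_zero, Matrix.mulVec_zero]
    rw [hzero, add_zero]
  have hquad : ∀ i, (star (p i) ⬝ᵥ (ptraceA (Matrix.vecMulVec φ (star φ))) *ᵥ p i).re
      = ∑ a, Complex.normSq ((JS *ᵥ q i) a) := by
    intro i
    rw [hpdef]
    rw [ptrace_quad φ (q i), hJq i, re_dot_self]
  calc chi n (ptraceA (Matrix.vecMulVec φ (star φ)))
      ≤ ∑ i ∈ s, hσ.eigenvalues i := h1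
    _ ≤ ∑ i, (star (p i) ⬝ᵥ (ptraceA (Matrix.vecMulVec φ (star φ))) *ᵥ p i).re := hsle
    _ = ∑ i, ∑ a, Complex.normSq ((JS *ᵥ q i) a) := Finset.sum_congr rfl fun i _ => hquad i
    _ = ∑ a, ∑ i, Complex.normSq ((JS *ᵥ q i) a) := Finset.sum_comm
    _ ≤ ∑ a, ∑ j, Complex.normSq (JS a j) :=
        Finset.sum_le_sum fun a _ => bessel_rows JS q hq a
    _ = (star φS ⬝ᵥ φS).re := by
        rw [re_dot_self, ← Finset.univ_product_univ, Finset.sum_product]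
        rfl

/-- Theorem 2 of the paper: for product operators `A_k ⊗ B_k` and a pure state `ψ`,
`Σ_k χₙ(Tr_A[(A_k⊗B_k)|ψ⟩⟨ψ|(A_k⊗B_k)ᴴ]) ≤ ‖R‖ χₙ(Tr_A|ψ⟩⟨ψ|)` where
`R = Σ_k A_kᴴA_k ⊗ B_kᴴB_k`. -/
theorem stmt7 {D N : ℕ} (A B : Fin N → Matrix (Fin D) (Fin D) ℂ)
    (ψ : Fin D × Fin D → ℂ) (hψ : star ψ ⬝ᵥ ψ = 1)
    (n : ℕ) (hn1 : 1 ≤ n) (hnD : n ≤ D) :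
    ∑ k : Fin N,
      chi n (ptraceA (((A k) ⊗ₖ (B k)) * Matrix.vecMulVec ψ (star ψ) * ((A k) ⊗ₖ (B k))ᴴ))
      ≤ maxEig (∑ k : Fin N, ((A k)ᴴ * (A k)) ⊗ₖ ((B k)ᴴ * (B k))) *
        chi n (ptraceA (Matrix.vecMulVec ψ (star ψ))) := by
  classical
  set ρ := ptraceA (Matrix.vecMulVec ψ (star ψ)) with hρdef
  have hρ : ρ.IsHermitian := ptraceA_vecMulVec_hermitian ψ
  obtain ⟨S, hScard, hSval⟩ := chi_exists ρ hρ hnD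
  set u : Fin D → (Fin D → ℂ) :=
    fun i => (WithLp.equiv 2 (Fin D → ℂ)) (hρ.eigenvectorBasis i) with hudef
  have hu : ∀ i j, star (u i) ⬝ᵥ u j = if i = j then 1 else 0 := by
    intro i j
    have h1 := orthonormal_iff_ite.mp hρ.eigenvectorBasis.orthonormal i j
    rw [EuclideanSpace.inner_eq_star_dotProduct, dotProduct_comm] at h1
    exact h1
  -- completeness of the eigenbasis
  have hcomp : ∑ i, Matrix.vecMulVec (u i) (star (u i)) = 1 := by
    have h1 := Matrix.mem_unitaryGroup_iff.mp hρ.eigenvectorUnitary.2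
    calc ∑ i, Matrix.vecMulVec (u i) (star (u i))
        = (hρ.eigenvectorUnitary : Matrix (Fin D) (Fin D) ℂ)
            * star (hρ.eigenvectorUnitary : Matrix (Fin D) (Fin D) ℂ) := by
          ext j j'
          rw [Matrix.sum_apply, Matrix.mul_apply]
          refine Finset.sum_congr rfl fun i _ => ?_
          simp [hudef, Matrix.vecMulVec_apply, Matrix.star_apply,
            Matrix.IsHermitian.eigenvectorUnitary_apply]
      _ = 1 := h1
  set P := ∑ i ∈ S, Matrix.vecMulVec (u i) (star (u i)) with hPdef
  have hPherm : Pᴴ = P := proj_herm u S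
  have hPidem : P * P = P := proj_idem u hu S
  set ψS := ((1 : Matrix (Fin D) (Fin D) ℂ) ⊗ₖ P) *ᵥ ψ with hψS
  have hkronP : ((1 : Matrix (Fin D) (Fin D) ℂ) ⊗ₖ P)ᴴ * ((1 : Matrix (Fin D) (Fin D) ℂ) ⊗ₖ P) = (1 ⊗ₖ P : Matrix (Fin D × Fin D) (Fin D × Fin D) ℂ) := by
    rw [kron_conjTranspose, Matrix.conjTranspose_one, hPherm, ← Matrix.mul_kronecker_mul,
      Matrix.one_mul, hPidem]
  -- the norm of ψS
  have hdotψS : star ψS ⬝ᵥ ψS = ((∑ i ∈ S, hρ.eigenvalues i : ℝ) : ℂ) := by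
    rw [hψS, star_mulVec, dotProduct_mulVec, vecMul_vecMul, ← dotProduct_mulVec, hkronP,
      dot_one_kron, ← hρdef, hPdef, Finset.sum_mul, Matrix.trace_sum]
    rw [Finset.sum_congr rfl fun i (_ : i ∈ S) => trace_vecMulVec_mul (u i) (star (u i)) ρ]
    push_cast
    refine Finset.sum_congr rfl fun i _ => ?_
    have hmv : ρ *ᵥ u i = hρ.eigenvalues i • u i := hρ.mulVec_eigenvectorBasis i
    rw [hmv, dotProduct_smul, hu i i, if_pos rfl]
    simp
  -- rank bound for the kernels
  have hrank : ∀ k : Fin N, ((B k * (1 - P))ᵀ).rank + n ≤ D := by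
    intro k
    have hcomplP : 1 - P = ∑ i ∈ Sᶜ, Matrix.vecMulVec (u i) (star (u i)) := by
      rw [hPdef, ← hcomp, sub_eq_iff_eq_add]
      exact (Finset.sum_compl_add_sum S _).symm
    have h2 : ((B k * (1 - P))ᵀ).rank ≤ (Sᶜ).card := by
      rw [Matrix.rank_transpose]
      calc (B k * (1 - P)).rank ≤ (1 - P).rank := Matrix.rank_mul_le_right _ _
        _ ≤ (Sᶜ).card := by rw [hcomplP]; exact rank_sum_vecMulVec u Sᶜ
    have h3 : (Sᶜ).card = D - n := by
      rw [Finset.card_compl, hScard]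
      simp
    omega
  -- per-k bound and assembly
  have hper : ∀ k : Fin N,
      chi n (ptraceA (((A k) ⊗ₖ (B k)) * Matrix.vecMulVec ψ (star ψ) * ((A k) ⊗ₖ (B k))ᴴ))
        ≤ (star ((A k ⊗ₖ B k) *ᵥ ψS) ⬝ᵥ ((A k ⊗ₖ B k) *ᵥ ψS)).re :=
    fun k => per_k (A k) (B k) ψ P (hrank k) hn1
  set R := ∑ k : Fin N, ((A k)ᴴ * (A k)) ⊗ₖ ((B k)ᴴ * (B k)) with hR
  have hRherm : R.IsHermitian := by
    rw [Matrix.IsHermitian, hR, Matrix.conjTranspose_sum]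
    refine Finset.sum_congr rfl fun k _ => ?_
    rw [kron_conjTranspose, Matrix.conjTranspose_mul, Matrix.conjTranspose_mul,
      Matrix.conjTranspose_conjTranspose, Matrix.conjTranspose_conjTranspose]
  have hsum : ∑ k : Fin N, (star ((A k ⊗ₖ B k) *ᵥ ψS) ⬝ᵥ ((A k ⊗ₖ B k) *ᵥ ψS)).re
      = (star ψS ⬝ᵥ (R *ᵥ ψS)).re := by
    have h1 : ∀ k, star ((A k ⊗ₖ B k) *ᵥ ψS) ⬝ᵥ ((A k ⊗ₖ B k) *ᵥ ψS)
        = star ψS ⬝ᵥ ((((A k)ᴴ * (A k)) ⊗ₖ ((B k)ᴴ * (B k))) *ᵥ ψS) := by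
      intro k
      rw [dot_mulVec_self, kron_conjTranspose, ← Matrix.mul_kronecker_mul]
    have hmv : R *ᵥ ψS
        = ∑ k : Fin N, ((((A k)ᴴ * (A k)) ⊗ₖ ((B k)ᴴ * (B k))) *ᵥ ψS) := by
      funext x
      simp only [hR, Matrix.mulVec, dotProduct, Matrix.sum_apply, Finset.sum_mul,
        Finset.sum_apply]
      exact Finset.sum_comm
    have hdsum : star ψS ⬝ᵥ (∑ k : Fin N, ((((A k)ᴴ * (A k)) ⊗ₖ ((B k)ᴴ * (B k))) *ᵥ ψS))
        = ∑ k, star ψS ⬝ᵥ ((((A k)ᴴ * (A k)) ⊗ₖ ((B k)ᴴ * (B k))) *ᵥ ψS) := by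
      simp only [dotProduct, Finset.mul_sum, Finset.sum_apply]
      exact Finset.sum_comm
    rw [hmv, hdsum, Complex.re_sum]
    exact Finset.sum_congr rfl fun k _ => congrArg Complex.re (h1 k)
  calc ∑ k : Fin N,
      chi n (ptraceA (((A k) ⊗ₖ (B k)) * Matrix.vecMulVec ψ (star ψ) * ((A k) ⊗ₖ (B k))ᴴ))
      ≤ ∑ k : Fin N, (star ((A k ⊗ₖ B k) *ᵥ ψS) ⬝ᵥ ((A k ⊗ₖ B k) *ᵥ ψS)).re :=
        Finset.sum_le_sum fun k _ => hper k
    _ = (star ψS ⬝ᵥ (R *ᵥ ψS)).re := hsum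
    _ ≤ maxEig R * (star ψS ⬝ᵥ ψS).re := rayleigh R hRherm ψS
    _ = maxEig R * chi n ρ := by rw [hdotψS, Complex.ofReal_re, hSval]
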